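/- Let C be the middle-third Cantor set and for x ∈ [−1,1] let S_x = {(b₁, b₂) ∈ C × C : −b₁ + b₂ = x}. Define η on ternary-digit pairs by the six-symbol coding of x (digits 0–5 representing the integer intervals I_0,…,I_5, with η(i) = 1 for i ∈ {0,1,4,5} and η(i) = 2 for i ∈ {2,3}). Then for x ∉ {q₁/3^{q₂} : q₁, q₂ ∈ ℤ} with coding i₀i₁i₂⋯, Card(S_x) = ∏_k η(i_k); in particular Card(S_x) is either a power of 2 or infinite. -/

import Mathlib

open Set Finset Filter Topology

def Spair (C : Set ℝ) (t : ℝ) : Set (ℝ × ℝ) :=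
  {p : ℝ × ℝ | p.1 ∈ C ∧ p.2 ∈ C ∧ -p.1 + p.2 = t}

lemma cantor_subset_Icc (C : Set ℝ) (hne : C.Nonempty) (hc : IsCompact C)
    (hself : C = (fun x : ℝ => x / 3) '' C ∪ (fun x : ℝ => (x + 2) / 3) '' C) :
    C ⊆ Set.Icc 0 1 := by
  obtain ⟨M, hMmem, hMub⟩ := hc.exists_isGreatest hne
  obtain ⟨L, hLmem, hLlb⟩ := hc.exists_isLeast hne
  have hM : M ≤ 0 ∨ M ≤ 1 := by
    have h := hMmem
    rw [hself] at h
    rcases h with ⟨m, hm, hme⟩ | ⟨m, hm, hme⟩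
    · left
      have h1 : m ≤ M := hMub hm
      have h2 : m / 3 = M := hme
      linarith
    · right
      have h1 : m ≤ M := hMub hm
      have h2 : (m + 2) / 3 = M := hme
      linarith
  have hL : 0 ≤ L ∨ 1 ≤ L := by
    have h := hLmem
    rw [hself] at h
    rcases h with ⟨m, hm, hme⟩ | ⟨m, hm, hme⟩
    · left
      have h1 : L ≤ m := hLlb hm
      have h2 : m / 3 = L := hme
      linarith
    · right
      have h1 : L ≤ m := hLlb hm
      have h2 : (m + 2) / 3 = L := hme
      linarith
  have hLM : L ≤ M := hLlb hMmem
  intro b hb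
  have h1 : L ≤ b := hLlb hb
  have h2 : b ≤ M := hMub hb
  constructor <;> rcases hM with hM | hM <;> rcases hL with hL | hL <;> linarith

lemma decompC {C : Set ℝ} (h01 : C ⊆ Set.Icc 0 1)
    (hself : C = (fun x : ℝ => x / 3) '' C ∪ (fun x : ℝ => (x + 2) / 3) '' C)
    {b : ℝ} (hb : b ∈ C) :
    ∃ m, m ∈ C ∧ 0 ≤ m ∧ m ≤ 1 ∧ (b = m / 3 ∨ b = (m + 2) / 3) := by
  rw [hself] at hb
  rcases hb with ⟨m, hm, hme⟩ | ⟨m, hm, hme⟩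
  · exact ⟨m, hm, (h01 hm).1, (h01 hm).2, Or.inl hme.symm⟩
  · exact ⟨m, hm, (h01 hm).1, (h01 hm).2, Or.inr hme.symm⟩

lemma mem_spair {C : Set ℝ} {t p q : ℝ} :
    (p, q) ∈ Spair C t ↔ p ∈ C ∧ q ∈ C ∧ -p + q = t := Iff.rfl

lemma stepNeg {C : Set ℝ} (h01 : C ⊆ Set.Icc 0 1)
    (hself : C = (fun x : ℝ => x / 3) '' C ∪ (fun x : ℝ => (x + 2) / 3) '' C)
    {t t' : ℝ} (ht' : t' ∈ Set.Ioo (-1 : ℝ) 1) (h : t' = 3 * t + 2) :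
    Spair C t = (fun q : ℝ × ℝ => ((q.1 + 2) / 3, q.2 / 3)) '' Spair C t' := by
  ext ⟨p, q⟩
  constructor
  · rw [mem_spair]
    rintro ⟨hp, hq, hd⟩
    obtain ⟨m, hmC, hm0, hm1, hmc⟩ := decompC h01 hself hp
    obtain ⟨m', hm'C, hm'0, hm'1, hm'c⟩ := decompC h01 hself hq
    rcases hmc with h1 | h1 <;> rcases hm'c with h2 | h2
    · exfalso; rw [h1, h2] at hd; have := ht'.2; linarith
    · exfalso; rw [h1, h2] at hd; have := ht'.2; linarith
    · refine ⟨(m, m'), mem_spair.2 ⟨hmC, hm'C, ?_⟩, ?_⟩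
      · rw [h1, h2] at hd; linarith
      · simp only [Prod.mk.injEq]; constructor <;> linarith
    · exfalso; rw [h1, h2] at hd; have := ht'.2; linarith
  · rintro ⟨⟨p', q'⟩, hm, heq⟩
    rw [mem_spair] at hm
    obtain ⟨h1, h2, h3⟩ := hm
    have hp : p = (p' + 2) / 3 := by
      have := congrArg Prod.fst heq; simpa using this.symm
    have hq : q = q' / 3 := by
      have := congrArg Prod.snd heq; simpa using this.symm
    rw [mem_spair]
    refine ⟨?_, ?_, by rw [hp, hq]; linarith⟩
    · rw [hself, hp]; right; exact ⟨p', h1, rfl⟩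
    · rw [hself, hq]; left; exact ⟨q', h2, rfl⟩

lemma stepPos {C : Set ℝ} (h01 : C ⊆ Set.Icc 0 1)
    (hself : C = (fun x : ℝ => x / 3) '' C ∪ (fun x : ℝ => (x + 2) / 3) '' C)
    {t t' : ℝ} (ht' : t' ∈ Set.Ioo (-1 : ℝ) 1) (h : t' = 3 * t - 2) :
    Spair C t = (fun q : ℝ × ℝ => (q.1 / 3, (q.2 + 2) / 3)) '' Spair C t' := by
  ext ⟨p, q⟩
  constructor
  · rw [mem_spair]
    rintro ⟨hp, hq, hd⟩
    obtain ⟨m, hmC, hm0, hm1, hmc⟩ := decompC h01 hself hp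
    obtain ⟨m', hm'C, hm'0, hm'1, hm'c⟩ := decompC h01 hself hq
    rcases hmc with h1 | h1 <;> rcases hm'c with h2 | h2
    · exfalso; rw [h1, h2] at hd; have := ht'.1; linarith
    · refine ⟨(m, m'), mem_spair.2 ⟨hmC, hm'C, ?_⟩, ?_⟩
      · rw [h1, h2] at hd; linarith
      · simp only [Prod.mk.injEq]; constructor <;> linarith
    · exfalso; rw [h1, h2] at hd; have := ht'.1; linarith
    · exfalso; rw [h1, h2] at hd; have := ht'.1; linarith
  · rintro ⟨⟨p', q'⟩, hm, heq⟩
    rw [mem_spair] at hm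
    obtain ⟨h1, h2, h3⟩ := hm
    have hp : p = p' / 3 := by
      have := congrArg Prod.fst heq; simpa using this.symm
    have hq : q = (q' + 2) / 3 := by
      have := congrArg Prod.snd heq; simpa using this.symm
    rw [mem_spair]
    refine ⟨?_, ?_, by rw [hp, hq]; linarith⟩
    · rw [hself, hp]; left; exact ⟨p', h1, rfl⟩
    · rw [hself, hq]; right; exact ⟨q', h2, rfl⟩

lemma stepZero {C : Set ℝ} (h01 : C ⊆ Set.Icc 0 1)
    (hself : C = (fun x : ℝ => x / 3) '' C ∪ (fun x : ℝ => (x + 2) / 3) '' C)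
    {t t' : ℝ} (ht' : t' ∈ Set.Ioo (-1 : ℝ) 1) (h : t' = 3 * t) :
    Spair C t = (fun q : ℝ × ℝ => (q.1 / 3, q.2 / 3)) '' Spair C t' ∪
      (fun q : ℝ × ℝ => ((q.1 + 2) / 3, (q.2 + 2) / 3)) '' Spair C t' := by
  ext ⟨p, q⟩
  constructor
  · rw [mem_spair]
    rintro ⟨hp, hq, hd⟩
    obtain ⟨m, hmC, hm0, hm1, hmc⟩ := decompC h01 hself hp
    obtain ⟨m', hm'C, hm'0, hm'1, hm'c⟩ := decompC h01 hself hq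
    rcases hmc with h1 | h1 <;> rcases hm'c with h2 | h2
    · left
      refine ⟨(m, m'), mem_spair.2 ⟨hmC, hm'C, ?_⟩, ?_⟩
      · rw [h1, h2] at hd; linarith
      · simp only [Prod.mk.injEq]; constructor <;> linarith
    · exfalso; rw [h1, h2] at hd; have := ht'.2; linarith
    · exfalso; rw [h1, h2] at hd; have := ht'.1; linarith
    · right
      refine ⟨(m, m'), mem_spair.2 ⟨hmC, hm'C, ?_⟩, ?_⟩
      · rw [h1, h2] at hd; linarith
      · simp only [Prod.mk.injEq]; constructor <;> linarith
  · rintro (⟨⟨p', q'⟩, hm, heq⟩ | ⟨⟨p', q'⟩, hm, heq⟩) <;>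
      rw [mem_spair] at hm <;> obtain ⟨h1, h2, h3⟩ := hm
    · have hp : p = p' / 3 := by
        have := congrArg Prod.fst heq; simpa using this.symm
      have hq : q = q' / 3 := by
        have := congrArg Prod.snd heq; simpa using this.symm
      rw [mem_spair]
      refine ⟨?_, ?_, by rw [hp, hq]; linarith⟩
      · rw [hself, hp]; left; exact ⟨p', h1, rfl⟩
      · rw [hself, hq]; left; exact ⟨q', h2, rfl⟩
    · have hp : p = (p' + 2) / 3 := by
        have := congrArg Prod.fst heq; simpa using this.symm
      have hq : q = (q' + 2) / 3 := by
        have := congrArg Prod.snd heq; simpa using this.symm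
      rw [mem_spair]
      refine ⟨?_, ?_, by rw [hp, hq]; linarith⟩
      · rw [hself, hp]; right; exact ⟨p', h1, rfl⟩
      · rw [hself, hq]; right; exact ⟨q', h2, rfl⟩

lemma summable_aux (f : ℕ → ℝ) (hf : ∀ m, |f m| ≤ 2) :
    Summable (fun m => f m / 3 ^ (m + 1)) := by
  apply Summable.of_norm_bounded (g := fun m => 2 * (1 / 3) ^ m)
  · exact (summable_geometric_of_lt_one (by norm_num) (by norm_num)).mul_left 2
  · intro m
    have h3 : (0:ℝ) < 3 ^ (m + 1) := by positivity
    rw [Real.norm_eq_abs, abs_div, abs_of_pos h3]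
    rw [div_le_iff₀ h3]
    have : (2:ℝ) * (1/3)^m * 3^(m+1) = 6 := by
      rw [div_pow, one_pow, pow_succ]
      field_simp
      ring
    rw [this]
    linarith [hf m]

lemma mem_of_digits {C : Set ℝ} (hc : IsCompact C)
    (hself : C = (fun x : ℝ => x / 3) '' C ∪ (fun x : ℝ => (x + 2) / 3) '' C)
    {c : ℝ} (hcC : c ∈ C) (a : ℕ → ℝ) (ha : ∀ k, a k = 0 ∨ a k = 2) :
    (∑' k, a k / 3 ^ (k + 1)) ∈ C := by
  have key : ∀ n (a : ℕ → ℝ), (∀ k, a k = 0 ∨ a k = 2) →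
      ((∑ k ∈ Finset.range n, a k / 3 ^ (k + 1)) + c / 3 ^ n) ∈ C := by
    intro n
    induction n with
    | zero => intro a _; simpa using hcC
    | succ n IH =>
      intro a ha
      have h1 := IH (fun k => a (k + 1)) (fun k => ha (k + 1))
      have hsums : ∑ k ∈ Finset.range n, a (k + 1) / 3 ^ (k + 1 + 1)
          = ∑ k ∈ Finset.range n, a (k + 1) / 3 ^ (k + 1) / 3 :=
        Finset.sum_congr rfl (fun k _ => by ring)
      have heq : (∑ k ∈ Finset.range (n + 1), a k / 3 ^ (k + 1)) + c / 3 ^ (n + 1)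
          = (((∑ k ∈ Finset.range n, a (k + 1) / 3 ^ (k + 1)) + c / 3 ^ n) + a 0) / 3 := by
        rw [Finset.sum_range_succ', hsums, add_div, add_div, Finset.sum_div]
        ring
      rw [heq]
      rcases ha 0 with h0 | h0
      · rw [hself]; left
        exact ⟨_, h1, by simp only; rw [h0, add_zero]⟩
      · rw [hself]; right
        exact ⟨_, h1, by simp only; rw [h0]⟩
  have hsummable : Summable (fun k => a k / 3 ^ (k + 1)) := by
    apply summable_aux
    intro m
    rcases ha m with h | h <;> rw [h] <;> norm_num
  have htend1 : Tendsto (fun n => ∑ k ∈ Finset.range n, a k / 3 ^ (k + 1)) atTop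
      (𝓝 (∑' k, a k / 3 ^ (k + 1))) := hsummable.hasSum.tendsto_sum_nat
  have htend2 : Tendsto (fun n : ℕ => c / 3 ^ n) atTop (𝓝 0) := by
    have h : (fun n : ℕ => c / 3 ^ n) = fun n : ℕ => c * (1 / 3) ^ n := by
      funext n; rw [div_pow, one_pow]; ring
    rw [h]
    have := (tendsto_pow_atTop_nhds_zero_of_lt_one (by norm_num : (0:ℝ) ≤ 1/3)
      (by norm_num : (1:ℝ)/3 < 1)).const_mul c
    simpa using this
  have htend : Tendsto (fun n => (∑ k ∈ Finset.range n, a k / 3 ^ (k + 1)) + c / 3 ^ n) atTop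
      (𝓝 (∑' k, a k / 3 ^ (k + 1))) := by
    simpa using htend1.add htend2
  exact hc.isClosed.mem_of_tendsto htend (Filter.Eventually.of_forall (fun n => key n a ha))

lemma spair_nonempty {C : Set ℝ} (hne : C.Nonempty) (hc : IsCompact C)
    (hself : C = (fun x : ℝ => x / 3) '' C ∪ (fun x : ℝ => (x + 2) / 3) '' C)
    (w : ℕ → ℝ) (d : ℕ → ℝ) (hd : ∀ m, d m = -2 ∨ d m = 0 ∨ d m = 2)
    (hw : ∀ m, |w m| ≤ 1) (hrec : ∀ m, w (m + 1) = 3 * w m - d m) :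
    (Spair C (w 0)).Nonempty := by
  obtain ⟨c, hcC⟩ := hne
  set α : ℕ → ℝ := fun m => if d m = -2 then (2:ℝ) else 0 with hα
  set β : ℕ → ℝ := fun m => if d m = 2 then (2:ℝ) else 0 with hβ
  have hαd : ∀ k, α k = 0 ∨ α k = 2 := by
    intro k; by_cases h : d k = -2 <;> simp [hα, h]
  have hβd : ∀ k, β k = 0 ∨ β k = 2 := by
    intro k; by_cases h : d k = 2 <;> simp [hβ, h]
  have hαβ : ∀ m, β m - α m = d m := by
    intro m
    rcases hd m with h | h | h <;> rw [h] <;> norm_num [hα, hβ, h]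
  have hb₁C : (∑' k, α k / 3 ^ (k + 1)) ∈ C := mem_of_digits hc hself hcC α hαd
  have hb₂C : (∑' k, β k / 3 ^ (k + 1)) ∈ C := mem_of_digits hc hself hcC β hβd
  have sα : Summable (fun m => α m / 3 ^ (m + 1)) :=
    summable_aux α (fun m => by rcases hαd m with h | h <;> rw [h] <;> norm_num)
  have sβ : Summable (fun m => β m / 3 ^ (m + 1)) :=
    summable_aux β (fun m => by rcases hβd m with h | h <;> rw [h] <;> norm_num)
  have sd : Summable (fun m => d m / 3 ^ (m + 1)) :=
    summable_aux d (fun m => by rcases hd m with h | h | h <;> rw [h] <;> norm_num)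
  have hsub : ∑' m, d m / 3 ^ (m + 1)
      = (∑' k, β k / 3 ^ (k + 1)) - (∑' k, α k / 3 ^ (k + 1)) := by
    rw [← sβ.tsum_sub sα]
    apply tsum_congr
    intro m
    rw [div_sub_div_same, hαβ]
  have hpartial : ∀ M, w 0 - ∑ m ∈ Finset.range M, d m / 3 ^ (m + 1) = w M / 3 ^ M := by
    intro M
    induction M with
    | zero => simp
    | succ M IH =>
      rw [Finset.sum_range_succ, ← sub_sub, IH, hrec M]
      have h3 : (3:ℝ) ^ M ≠ 0 := by positivity
      field_simp
      ring
  have hbnd : ∀ M, ‖w 0 - ∑ m ∈ Finset.range M, d m / 3 ^ (m + 1)‖ ≤ (1/3 : ℝ) ^ M := by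
    intro M
    rw [Real.norm_eq_abs, hpartial M]
    have h3 : |(3:ℝ) ^ M| = 3 ^ M := abs_of_pos (by positivity)
    rw [abs_div, h3, div_pow, one_pow]
    gcongr
    exact hw M
  have h0 : Tendsto (fun M : ℕ => (1/3 : ℝ) ^ M) atTop (𝓝 0) :=
    tendsto_pow_atTop_nhds_zero_of_lt_one (by norm_num) (by norm_num)
  have hz : Tendsto (fun M => w 0 - ∑ m ∈ Finset.range M, d m / 3 ^ (m + 1)) atTop (𝓝 0) :=
    squeeze_zero_norm hbnd h0
  have ht1 : Tendsto (fun M => ∑ m ∈ Finset.range M, d m / 3 ^ (m + 1)) atTop (𝓝 (w 0)) := by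
    have h := ((tendsto_const_nhds : Tendsto (fun _ : ℕ => w 0) atTop (𝓝 (w 0)))).sub hz
    simpa using h
  have ht2 : Tendsto (fun M => ∑ m ∈ Finset.range M, d m / 3 ^ (m + 1)) atTop
      (𝓝 (∑' m, d m / 3 ^ (m + 1))) := sd.hasSum.tendsto_sum_nat
  have hw0 : ∑' m, d m / 3 ^ (m + 1) = w 0 := tendsto_nhds_unique ht2 ht1
  refine ⟨(∑' k, α k / 3 ^ (k + 1), ∑' k, β k / 3 ^ (k + 1)), hb₁C, hb₂C, ?_⟩
  simp only
  linarith [hsub, hw0]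

/-- For the middle-third Cantor set `C` and `S_x = {(b₁,b₂) ∈ C × C : -b₁ + b₂ = x}`:
if `x ∈ [-1,1]` is not a triadic rational and has the six-symbol coding `i₀i₁i₂⋯`
(where digit `j` represents the integer interval `I_j = 3⁻¹[j-3, j-2]`, the orbit `y k`
stays in the interior of `I_{i k}` and evolves by the expanding maps `y ↦ 3y - (j-3) + t(j)`
with type `t(j) = -1` for even `j` and `t(j) = 0` for odd `j`), then
`Card(S_x) = ∏_k η(i_k)` where `η = 2` on digits `{2,3}` and `η = 1` on `{0,1,4,5}`:
in particular `Card(S_x)` is `2^u` if the digits `2, 3` occur exactly `u` times, and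
`S_x` is infinite if they occur infinitely often. -/
theorem cantor_diff_counting_formula (C : Set ℝ) (hne : C.Nonempty) (hc : IsCompact C)
    (hself : C = (fun x : ℝ => x / 3) '' C ∪ (fun x : ℝ => (x + 2) / 3) '' C)
    (x : ℝ) (hx : x ∈ Set.Icc (-1 : ℝ) 1)
    (hxnt : ¬ ∃ q₁ q₂ : ℤ, x = (q₁ : ℝ) / (3 : ℝ) ^ q₂)
    (i : ℕ → Fin 6) (y : ℕ → ℝ) (hy0 : y 0 = x)
    (hmem : ∀ k : ℕ, y k ∈ Set.Ioo ((((i k : ℕ) : ℝ) - 3) / 3) ((((i k : ℕ) : ℝ) - 2) / 3))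
    (hrec : ∀ k : ℕ, y (k + 1) =
      3 * y k - (((i k : ℕ) : ℝ) - 3) + (if (i k : ℕ) % 2 = 0 then (-1 : ℝ) else 0)) :
    (∀ u : ℕ, {k : ℕ | (i k : ℕ) = 2 ∨ (i k : ℕ) = 3}.encard = u →
      {p : ℝ × ℝ | p.1 ∈ C ∧ p.2 ∈ C ∧ -p.1 + p.2 = x}.encard = 2 ^ u) ∧
    ({k : ℕ | (i k : ℕ) = 2 ∨ (i k : ℕ) = 3}.Infinite →
      {p : ℝ × ℝ | p.1 ∈ C ∧ p.2 ∈ C ∧ -p.1 + p.2 = x}.encard = ⊤) := by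
  classical
  have h01 := cantor_subset_Icc C hne hc hself
  set dd : ℕ → ℝ := fun k =>
    if (i k : ℕ) ≤ 1 then (-2 : ℝ) else if (i k : ℕ) ≤ 3 then 0 else 2 with hdd
  have hcases : ∀ k, (y (k + 1) = 3 * y k - dd k) ∧ (dd k = -2 ∨ dd k = 0 ∨ dd k = 2) ∧
      (dd k = 0 ↔ ((i k : ℕ) = 2 ∨ (i k : ℕ) = 3)) := by
    intro k
    have hr := hrec k
    have h6 : (i k : ℕ) < 6 := (i k).isLt
    have hv : (i k : ℕ) = 0 ∨ (i k : ℕ) = 1 ∨ (i k : ℕ) = 2 ∨ (i k : ℕ) = 3 ∨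
        (i k : ℕ) = 4 ∨ (i k : ℕ) = 5 := by omega
    rcases hv with h | h | h | h | h | h <;>
      rw [h] at hr <;> norm_num at hr <;>
      simp only [hdd, h] <;> norm_num <;> linarith
  have hIoo : ∀ k, y k ∈ Set.Ioo (-1 : ℝ) 1 := by
    intro k
    obtain ⟨hl, hr⟩ := hmem k
    have h6 : ((i k : ℕ) : ℝ) ≤ 5 := by
      have := (i k).isLt
      exact_mod_cast Nat.lt_succ_iff.mp this
    have h0 : (0 : ℝ) ≤ ((i k : ℕ) : ℝ) := Nat.cast_nonneg _
    constructor <;> linarith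
  set c : ℕ → ℕ∞ := fun k => if (i k : ℕ) = 2 ∨ (i k : ℕ) = 3 then 2 else 1 with hcdef
  have inj1 : Function.Injective (fun q : ℝ × ℝ => (q.1 / 3, q.2 / 3)) := by
    intro a b hab
    simp only [Prod.mk.injEq, Prod.ext_iff] at hab ⊢
    constructor <;> linarith [hab.1, hab.2]
  have inj2 : Function.Injective (fun q : ℝ × ℝ => ((q.1 + 2) / 3, (q.2 + 2) / 3)) := by
    intro a b hab
    simp only [Prod.mk.injEq, Prod.ext_iff] at hab ⊢
    constructor <;> linarith [hab.1, hab.2]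
  have inj3 : Function.Injective (fun q : ℝ × ℝ => ((q.1 + 2) / 3, q.2 / 3)) := by
    intro a b hab
    simp only [Prod.mk.injEq, Prod.ext_iff] at hab ⊢
    constructor <;> linarith [hab.1, hab.2]
  have inj4 : Function.Injective (fun q : ℝ × ℝ => (q.1 / 3, (q.2 + 2) / 3)) := by
    intro a b hab
    simp only [Prod.mk.injEq, Prod.ext_iff] at hab ⊢
    constructor <;> linarith [hab.1, hab.2]
  have hstep : ∀ k, (Spair C (y k)).encard = c k * (Spair C (y (k + 1))).encard := by
    intro k
    obtain ⟨hk1, hk2, hk3⟩ := hcases k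
    rcases hk2 with h | h | h
    · have hck : c k = 1 := by
        have hnP : ¬((i k : ℕ) = 2 ∨ (i k : ℕ) = 3) := by
          intro hp
          rw [hk3.mpr hp] at h; norm_num at h
        simp [hcdef, hnP]
      have hset := stepNeg h01 hself (hIoo (k + 1)) (by rw [hk1, h]; try ring)
      rw [hset, inj3.encard_image _, hck, one_mul]
    · have hck : c k = 2 := by simp [hcdef, hk3.mp h]
      have hset := stepZero h01 hself (hIoo (k + 1)) (by rw [hk1, h]; try ring)
      have hdisj : Disjoint ((fun q : ℝ × ℝ => (q.1 / 3, q.2 / 3)) '' Spair C (y (k + 1)))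
          ((fun q : ℝ × ℝ => ((q.1 + 2) / 3, (q.2 + 2) / 3)) '' Spair C (y (k + 1))) := by
        rw [Set.disjoint_left]
        rintro z ⟨a, ha, rfl⟩ ⟨b, hb, hba⟩
        have h1 := (h01 ha.1).2
        have h2 := (h01 hb.1).1
        have := congrArg Prod.fst hba
        simp only at this
        linarith
      rw [hset, Set.encard_union_eq hdisj, inj1.encard_image _, inj2.encard_image _,
        hck, two_mul]
    · have hck : c k = 1 := by
        have hnP : ¬((i k : ℕ) = 2 ∨ (i k : ℕ) = 3) := by
          intro hp
          rw [hk3.mpr hp] at h; norm_num at h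
        simp [hcdef, hnP]
      have hset := stepPos h01 hself (hIoo (k + 1)) (by rw [hk1, h]; try ring)
      rw [hset, inj4.encard_image _, hck, one_mul]
  have hprod : ∀ n, (Spair C x).encard
      = (∏ k ∈ Finset.range n, c k) * (Spair C (y n)).encard := by
    intro n
    induction n with
    | zero => simp [hy0]
    | succ n IH =>
      rw [Finset.prod_range_succ, mul_assoc, ← hstep n]
      exact IH
  have hnon : ∀ n, (Spair C (y n)).Nonempty := by
    intro n
    exact spair_nonempty hne hc hself (fun m => y (n + m)) (fun m => dd (n + m))
      (fun m => (hcases (n + m)).2.1)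
      (fun m => abs_le.mpr ⟨le_of_lt (hIoo (n + m)).1, le_of_lt (hIoo (n + m)).2⟩)
      (fun m => (hcases (n + m)).1)
  have huniq : ∀ n, (∀ k, n ≤ k → ¬((i k : ℕ) = 2 ∨ (i k : ℕ) = 3)) →
      ∀ P ∈ Spair C (y n), ∀ Q ∈ Spair C (y n), P = Q := by
    intro n hA
    have hM : ∀ M : ℕ, ∀ k, n ≤ k → ∀ P ∈ Spair C (y k), ∀ Q ∈ Spair C (y k),
        |P.1 - Q.1| ≤ (1/3 : ℝ) ^ M := by
      intro M
      induction M with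
      | zero =>
        intro k hk P hP Q hQ
        have h1 := (h01 hP.1).1; have h2 := (h01 hP.1).2
        have h3 := (h01 hQ.1).1; have h4 := (h01 hQ.1).2
        rw [pow_zero]
        exact abs_le.mpr ⟨by linarith, by linarith⟩
      | succ M IH =>
        intro k hk P hP Q hQ
        obtain ⟨hk1, hk2, hk3⟩ := hcases k
        rcases hk2 with h | h | h
        · have hset := stepNeg h01 hself (hIoo (k + 1)) (by rw [hk1, h]; try ring)
          rw [hset] at hP hQ
          obtain ⟨P', hP', rfl⟩ := hP
          obtain ⟨Q', hQ', rfl⟩ := hQ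
          have hIH := IH (k + 1) (le_trans hk (Nat.le_succ k)) P' hP' Q' hQ'
          simp only
          have heq : (P'.1 + 2) / 3 - (Q'.1 + 2) / 3 = (P'.1 - Q'.1) / 3 := by ring
          rw [heq, abs_div, abs_of_pos (by norm_num : (0:ℝ) < 3), pow_succ]
          rw [div_le_iff₀ (by norm_num : (0:ℝ) < 3)] at *
          nlinarith [abs_nonneg (P'.1 - Q'.1)]
        · exact absurd (hk3.mp h) (hA k hk)
        · have hset := stepPos h01 hself (hIoo (k + 1)) (by rw [hk1, h]; try ring)
          rw [hset] at hP hQ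
          obtain ⟨P', hP', rfl⟩ := hP
          obtain ⟨Q', hQ', rfl⟩ := hQ
          have hIH := IH (k + 1) (le_trans hk (Nat.le_succ k)) P' hP' Q' hQ'
          simp only
          have heq : P'.1 / 3 - Q'.1 / 3 = (P'.1 - Q'.1) / 3 := by ring
          rw [heq, abs_div, abs_of_pos (by norm_num : (0:ℝ) < 3), pow_succ]
          rw [div_le_iff₀ (by norm_num : (0:ℝ) < 3)] at *
          nlinarith [abs_nonneg (P'.1 - Q'.1)]
    intro P hP Q hQ
    have h1 : P.1 = Q.1 := by
      by_contra hne'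
      have hd0 : 0 < |P.1 - Q.1| := abs_pos.mpr (sub_ne_zero.mpr hne')
      obtain ⟨M, hM'⟩ := exists_pow_lt_of_lt_one hd0 (by norm_num : (1/3 : ℝ) < 1)
      exact absurd (hM M n le_rfl P hP Q hQ) (not_le.mpr hM')
    have h2 : P.2 = Q.2 := by
      have e1 := hP.2.2
      have e2 := hQ.2.2
      linarith
    exact Prod.ext h1 h2
  constructor
  · -- finite case
    intro u hu
    show (Spair C x).encard = 2 ^ u
    have hfin : {k | (i k : ℕ) = 2 ∨ (i k : ℕ) = 3}.Finite :=
      Set.finite_of_encard_eq_coe hu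
    obtain ⟨N, hN⟩ := hfin.bddAbove
    set n := N + 1 with hn
    have hsubr : ∀ k ∈ {k | (i k : ℕ) = 2 ∨ (i k : ℕ) = 3}, k < n :=
      fun k hk => Nat.lt_succ_of_le (hN hk)
    have h23 : ∀ k, n ≤ k → ¬((i k : ℕ) = 2 ∨ (i k : ℕ) = 3) := by
      intro k hk h
      have := hsubr k h
      omega
    have he1 : (Spair C (y n)).encard = 1 := by
      obtain ⟨P, hP⟩ := hnon n
      rw [Set.encard_eq_one]
      exact ⟨P, Set.eq_singleton_iff_unique_mem.mpr
        ⟨hP, fun Q hQ => huniq n h23 Q hQ P hP⟩⟩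
    have hprodn : ∏ k ∈ Finset.range n, c k = 2 ^ u := by
      simp only [hcdef]
      rw [Finset.prod_ite, Finset.prod_const, Finset.prod_const, one_pow, mul_one]
      congr 1
      have hfe : (Finset.range n).filter (fun k => (i k : ℕ) = 2 ∨ (i k : ℕ) = 3)
          = hfin.toFinset := by
        ext k
        simp only [Finset.mem_filter, Finset.mem_range, Set.Finite.mem_toFinset,
          Set.mem_setOf_eq]
        exact ⟨fun h => h.2, fun h => ⟨hsubr k h, h⟩⟩
      rw [hfe]
      have hcard := hfin.encard_eq_coe_toFinset_card
      rw [hu] at hcard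
      exact_mod_cast hcard.symm
    rw [hprod n, hprodn, he1, mul_one]
  · -- infinite case
    intro hinf
    show (Spair C x).encard = ⊤
    by_contra hne'
    obtain ⟨N, hN⟩ := WithTop.ne_top_iff_exists.mp hne'
    obtain ⟨t, hts, htc⟩ := hinf.exists_subset_card_eq (N + 1)
    set n := t.sup id + 1 with hn
    have htr : t ⊆ Finset.range n := fun k hk =>
      Finset.mem_range.mpr (Nat.lt_succ_of_le (Finset.le_sup (f := id) hk))
    have hone : ∀ k ∈ Finset.range n, k ∉ t → 1 ≤ c k := by
      intro k _ _
      simp only [hcdef]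
      split <;> norm_num
    have h2t : ∀ k ∈ t, c k = 2 := by
      intro k hk
      have := hts hk
      simp only [Set.mem_setOf_eq] at this
      simp [hcdef, this]
    have hle : (2 : ℕ∞) ^ (N + 1) ≤ ∏ k ∈ Finset.range n, c k := by
      calc (2 : ℕ∞) ^ (N + 1) = ∏ k ∈ t, c k := by
            rw [Finset.prod_congr rfl h2t, Finset.prod_const, htc]
        _ ≤ ∏ k ∈ Finset.range n, c k :=
            Finset.prod_le_prod_of_subset_of_one_le' htr hone
    have hge1 : 1 ≤ (Spair C (y n)).encard :=
      Set.one_le_encard_iff_nonempty.mpr (hnon n)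
    have hbig : (2 : ℕ∞) ^ (N + 1) ≤ (Spair C x).encard := by
      rw [hprod n]
      calc (2 : ℕ∞) ^ (N + 1) = 2 ^ (N + 1) * 1 := (mul_one _).symm
        _ ≤ _ := mul_le_mul' hle hge1
    rw [← hN] at hbig
    have hbig2 : ((2 ^ (N + 1) : ℕ) : ℕ∞) ≤ (N : ℕ∞) := by push_cast; exact hbig
    have hbig' : (2 : ℕ) ^ (N + 1) ≤ N := by exact_mod_cast hbig2
    have : N < 2 ^ N := Nat.lt_two_pow_self
    have h2 : (2:ℕ) ^ N ≤ 2 ^ (N + 1) := Nat.pow_le_pow_right (by norm_num) (Nat.le_succ N)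
    omega
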